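/- Let Δ ≥ 2 and let G be a connected infinite Δ-regular graph. Suppose there is a sequence V₀, V₁, V₂, … of finite subsets of V(G) such that (1) the union of all the Vᵢ equals V(G), and (2) for some fixed ε with 0 < ε < 1, for every i ≥ 1 and every v ∈ Vᵢ, the number of neighbors of v lying in V₀ ∪ V₁ ∪ ⋯ ∪ V_{i−1} is at least εΔ. Then every pair (q, r) with 0 < q < ε and r > (1−ε)q lies in the epidemic region Ω_G; that is, strategy A becomes epidemic in the contagion game (G, q, r). -/
import Mathlib


namespace Contagion

open scoped BigOperators

/-- The three strategies in the contagion game. -/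
inductive Strat
  | A | B | AB
deriving DecidableEq

/-- Pairwise payoff to a player using the first strategy against a neighbor
using the second strategy, in the contagion game with parameters `q, r`. -/
noncomputable def pairPayoff (q r : ℝ) : Strat → Strat → ℝ
  | .A, .A => 1 - q
  | .A, .B => 0
  | .A, .AB => 1 - q
  | .B, .A => 0
  | .B, .B => q
  | .B, .AB => q
  | .AB, .A => 1 - q - r
  | .AB, .B => q - r
  | .AB, .AB => max q (1 - q) - r

variable {V : Type*}

/-- Total payoff to vertex `v` for playing strategy `s` against profile `σ`. -/
noncomputable def totalPayoff (G : SimpleGraph V) (q r : ℝ) (σ : V → Strat)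
    (v : V) (s : Strat) : ℝ :=
  ∑ᶠ u ∈ G.neighborSet v, pairPayoff q r s (σ u)

/-- `s` is a best response of vertex `v` to the profile `σ`. -/
def IsBestResponse (G : SimpleGraph V) (q r : ℝ) (σ : V → Strat) (v : V) (s : Strat) : Prop :=
  ∀ s' : Strat, totalPayoff G q r σ v s' ≤ totalPayoff G q r σ v s

/-- Strategy `A` becomes epidemic in the contagion game `(G, q, r)`:
there are a finite initial set `S₀` (playing `A`, everybody else playing `B`) and a
sequence `α` of vertices in which every vertex appears at least once, such that updating
at step `n` the vertex `α n` to a best response makes every vertex eventually adopt `A`. -/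
def Epidemic (G : SimpleGraph V) (q r : ℝ) : Prop :=
  ∃ (S₀ : Set V) (α : ℕ → V) (σ : ℕ → V → Strat),
    S₀.Finite ∧
    Function.Surjective α ∧
    (∀ v ∈ S₀, σ 0 v = Strat.A) ∧
    (∀ v ∉ S₀, σ 0 v = Strat.B) ∧
    (∀ n, IsBestResponse G q r (σ n) (α n) (σ (n + 1) (α n))) ∧
    (∀ n v, v ≠ α n → σ (n + 1) v = σ n v) ∧
    (∀ v, ∃ n, σ n v = Strat.A)

/-- The epidemic region `Ω_G ⊆ ℝ²` of `G`. -/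
def epidemicRegion (G : SimpleGraph V) : Set (ℝ × ℝ) :=
  {p | 0 < p.1 ∧ p.1 < 1 ∧ 0 < p.2 ∧ Epidemic G p.1 p.2}

/-- `G` is `Δ`-regular: every vertex has exactly `Δ` neighbors. -/
def IsRegular (G : SimpleGraph V) (Δ : ℕ) : Prop :=
  ∀ v, (G.neighborSet v).ncard = Δ

/-- The number of neighbors of `v` lying in the set `S`. -/
noncomputable def degIn (G : SimpleGraph V) (v : V) (S : Set V) : ℕ :=
  (G.neighborSet v ∩ S).ncard

/-- `RT Δ`: the infinite rooted tree in which the root (the empty list) has `Δ - 1`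
children and every other vertex also has `Δ - 1` children (hence degree `Δ`). -/
def RT (Δ : ℕ) : SimpleGraph (List (Fin (Δ - 1))) :=
  SimpleGraph.fromRel (fun l l' => ∃ a : Fin (Δ - 1), l' = a :: l)

/-- `G` contains a subgraph isomorphic to `RT Δ`. -/
def HasRTCopy (Δ : ℕ) (G : SimpleGraph V) : Prop :=
  ∃ f : List (Fin (Δ - 1)) → V,
    Function.Injective f ∧ ∀ x y, (RT Δ).Adj x y → G.Adj (f x) (f y)

/-- The thick half line `HL_Δ` (for even `Δ`), columns indexed by `ℕ` starting with the
first column `0`; `(k, i)` and `(l, j)` are adjacent exactly when `|k - l| = 1`. -/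
def HL (Δ : ℕ) : SimpleGraph (ℕ × Fin (Δ / 2)) :=
  SimpleGraph.fromRel (fun x y => y.1 = x.1 + 1)

/-- The epidemic region of the infinite `Δ`-regular tree:
`{(q,r) : q,r > 0, r ≥ ((Δ-1)/Δ)q, q ≤ 1/Δ} ∪ {(q,r) : q,r > 0, 2q + Δr ≤ 1}`. -/
def treeRegion (Δ : ℕ) : Set (ℝ × ℝ) :=
  {p | 0 < p.1 ∧ 0 < p.2 ∧ ((Δ : ℝ) - 1) / Δ * p.1 ≤ p.2 ∧ p.1 ≤ 1 / Δ} ∪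
  {p | 0 < p.1 ∧ 0 < p.2 ∧ 2 * p.1 + Δ * p.2 ≤ 1}

/-- The epidemic region of the thick line `L_Δ`:
`{(q,r) : 0 < q ≤ 1/2, r ≥ q/2} ∪ {(q,r) : q,r > 0, r ≤ q/2, 2q + 2r ≤ 1}`. -/
def thickLineRegion : Set (ℝ × ℝ) :=
  {p | 0 < p.1 ∧ p.1 ≤ 1 / 2 ∧ p.1 / 2 ≤ p.2} ∪
  {p | 0 < p.1 ∧ 0 < p.2 ∧ p.2 ≤ p.1 / 2 ∧ 2 * p.1 + 2 * p.2 ≤ 1}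

/-- `(SAB, SB)` is a blocking structure for the contagion game `(G, q, r)`
on a `Δ`-regular graph `G`. -/
def IsBlockingStructure (G : SimpleGraph V) (Δ : ℕ) (q r : ℝ) (SAB SB : Set V) : Prop :=
  Disjoint SAB SB ∧ (SAB.Nonempty ∨ SB.Nonempty) ∧
  (∀ v ∈ SAB, r / q * Δ < (degIn G v SB : ℝ)) ∧
  ∀ v ∈ SB,
    (1 - q - r) * Δ < (1 - q) * (degIn G v SB : ℝ) + min q (1 - q) * (degIn G v SAB : ℝ) ∧
    (1 - q) * Δ < (degIn G v SB : ℝ) + q * (degIn G v SAB : ℝ)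

/-- The two strategies of the `A`-`B` coordination game. -/
inductive CStrat
  | A | B
deriving DecidableEq

/-- Pairwise payoff in the `A`-`B` coordination game `(G, q)`. -/
noncomputable def cPairPayoff (q : ℝ) : CStrat → CStrat → ℝ
  | .A, .A => 1 - q
  | .A, .B => 0
  | .B, .A => 0
  | .B, .B => q

/-- Total payoff to `v` for playing `s` against profile `σ` in the coordination game. -/
noncomputable def cTotalPayoff (G : SimpleGraph V) (q : ℝ) (σ : V → CStrat)
    (v : V) (s : CStrat) : ℝ :=
  ∑ᶠ u ∈ G.neighborSet v, cPairPayoff q s (σ u)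

/-- `s` is a best response of `v` to `σ` in the coordination game. -/
def CIsBestResponse (G : SimpleGraph V) (q : ℝ) (σ : V → CStrat) (v : V) (s : CStrat) : Prop :=
  ∀ s' : CStrat, cTotalPayoff G q σ v s' ≤ cTotalPayoff G q σ v s

/-- Strategy `A` becomes epidemic in the coordination game `(G, q)` starting from the
initial set `S₀`. -/
def CoordEpidemicFrom (G : SimpleGraph V) (q : ℝ) (S₀ : Set V) : Prop :=
  ∃ (α : ℕ → V) (σ : ℕ → V → CStrat),
    Function.Surjective α ∧
    (∀ v ∈ S₀, σ 0 v = CStrat.A) ∧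
    (∀ v ∉ S₀, σ 0 v = CStrat.B) ∧
    (∀ n, CIsBestResponse G q (σ n) (α n) (σ (n + 1) (α n))) ∧
    (∀ n v, v ≠ α n → σ (n + 1) v = σ n v) ∧
    (∀ v, ∃ n, σ n v = CStrat.A)

/-- Strategy `A` becomes epidemic in the coordination game `(G, q)`. -/
def CoordEpidemic (G : SimpleGraph V) (q : ℝ) : Prop :=
  ∃ S₀ : Set V, S₀.Finite ∧ CoordEpidemicFrom G q S₀


section Aux

variable {V : Type*}

private lemma totalPayoff_eq_aux (G : SimpleGraph V) (q r : ℝ) (σ : V → Strat) (v : V)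
    (hfin : (G.neighborSet v).Finite)
    (hAB : ∀ u ∈ G.neighborSet v, σ u ≠ Strat.AB) (s : Strat) :
    totalPayoff G q r σ v s =
      ((G.neighborSet v ∩ {u | σ u = Strat.A}).ncard : ℝ) * pairPayoff q r s Strat.A +
      ((G.neighborSet v ∩ {u | ¬ σ u = Strat.A}).ncard : ℝ) * pairPayoff q r s Strat.B := by
  classical
  have hset1 : G.neighborSet v ∩ {u | σ u = Strat.A}
      = ↑(hfin.toFinset.filter (fun u => σ u = Strat.A)) := by
    ext u; simp [Set.Finite.mem_toFinset, Set.mem_inter_iff]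
  have hset2 : G.neighborSet v ∩ {u | ¬ σ u = Strat.A}
      = ↑(hfin.toFinset.filter (fun u => ¬ σ u = Strat.A)) := by
    ext u; simp [Set.Finite.mem_toFinset, Set.mem_inter_iff]
  rw [hset1, hset2, Set.ncard_coe_finset, Set.ncard_coe_finset, totalPayoff,
    finsum_mem_eq_finite_toFinset_sum _ hfin,
    ← Finset.sum_filter_add_sum_filter_not hfin.toFinset (fun u => σ u = Strat.A)]
  congr 1
  · rw [Finset.sum_congr rfl (fun u hu => ?_), Finset.sum_const, nsmul_eq_mul]
    rw [(Finset.mem_filter.mp hu).2]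
  · rw [Finset.sum_congr rfl (fun u hu => ?_), Finset.sum_const, nsmul_eq_mul]
    have hu' := Finset.mem_filter.mp hu
    have hne := hAB u (hfin.mem_toFinset.mp hu'.1)
    cases h : σ u
    · exact absurd h hu'.2
    · rfl
    · exact absurd h hne

private lemma bestResponse_A (G : SimpleGraph V) {Δ : ℕ} {q r ε : ℝ}
    (hq0 : 0 < q) (hqε : q < ε) (hε1 : ε ≤ 1) (hrq : (1 - ε) * q < r)
    (σ : V → Strat) (v : V) (hfin : (G.neighborSet v).Finite)
    (hΔ : (G.neighborSet v).ncard = Δ)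
    (hAB : ∀ u ∈ G.neighborSet v, σ u ≠ Strat.AB)
    (ha : ε * Δ ≤ ((G.neighborSet v ∩ {u | σ u = Strat.A}).ncard : ℝ)) :
    IsBestResponse G q r σ v Strat.A := by
  classical
  have hdiff : G.neighborSet v ∩ {u | ¬ σ u = Strat.A}
      = G.neighborSet v \ {u | σ u = Strat.A} := by
    ext u; simp [Set.mem_inter_iff, Set.mem_diff]
  have hab : (G.neighborSet v ∩ {u | σ u = Strat.A}).ncard
      + (G.neighborSet v ∩ {u | ¬ σ u = Strat.A}).ncard = Δ := by
    rw [hdiff, Set.ncard_inter_add_ncard_diff_eq_ncard _ _ hfin, hΔ]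
  set a := (G.neighborSet v ∩ {u | σ u = Strat.A}).ncard with ha_def
  set b := (G.neighborSet v ∩ {u | ¬ σ u = Strat.A}).ncard with hb_def
  have habR : (a : ℝ) + (b : ℝ) = (Δ : ℝ) := by exact_mod_cast congrArg Nat.cast hab
  have hbnn : (0 : ℝ) ≤ (b : ℝ) := Nat.cast_nonneg b
  have hann : (0 : ℝ) ≤ (a : ℝ) := Nat.cast_nonneg a
  have hΔnn : (0 : ℝ) ≤ (Δ : ℝ) := Nat.cast_nonneg Δ
  have hb' : (b : ℝ) ≤ (1 - ε) * Δ := by nlinarith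
  have h1 : q * (b : ℝ) ≤ q * ((1 - ε) * Δ) := mul_le_mul_of_nonneg_left hb' hq0.le
  have h2 : (1 - ε) * q * (Δ : ℝ) ≤ r * Δ := mul_le_mul_of_nonneg_right hrq.le hΔnn
  have h3 : q * (Δ : ℝ) ≤ ε * Δ := mul_le_mul_of_nonneg_right hqε.le hΔnn
  have hr0 : 0 < r := by nlinarith
  have h4 : r * (a : ℝ) + r * (b : ℝ) = r * Δ := by rw [← habR]; ring
  intro s'
  rw [totalPayoff_eq_aux G q r σ v hfin hAB s', totalPayoff_eq_aux G q r σ v hfin hAB Strat.A]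
  simp only [← ha_def, ← hb_def]
  cases s'
  · exact le_rfl
  · simp only [pairPayoff]; nlinarith
  · simp only [pairPayoff]; nlinarith

variable [Infinite V]

private lemma exists_next (ρ : V → ℕ) (l : List V) :
    ∃ v : V, v ∉ l ∧ ∀ w : V, w ∉ l → ρ v ≤ ρ w := by
  have hS : {v : V | v ∉ l}.Nonempty := by
    have h1 : {v : V | v ∈ l}.Finite := l.finite_toSet
    have h2 := h1.infinite_compl
    rw [Set.compl_setOf] at h2
    exact h2.nonempty
  have himg : (ρ '' {v : V | v ∉ l}).Nonempty := hS.image ρ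
  obtain ⟨v, hv, he⟩ := Nat.sInf_mem himg
  exact ⟨v, hv, fun w hw => he ▸ Nat.sInf_le ⟨w, hw, rfl⟩⟩

private noncomputable def nextV (ρ : V → ℕ) (l : List V) : V :=
  Classical.choose (exists_next ρ l)

private lemma nextV_spec (ρ : V → ℕ) (l : List V) :
    nextV ρ l ∉ l ∧ ∀ w : V, w ∉ l → ρ (nextV ρ l) ≤ ρ w :=
  Classical.choose_spec (exists_next ρ l)

private noncomputable def prefs (ρ : V → ℕ) : ℕ → List V
  | 0 => []
  | n + 1 => prefs ρ n ++ [nextV ρ (prefs ρ n)]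

private noncomputable def alph (ρ : V → ℕ) (n : ℕ) : V := nextV ρ (prefs ρ n)

private lemma mem_prefs (ρ : V → ℕ) (n : ℕ) (v : V) :
    v ∈ prefs ρ n ↔ ∃ k < n, alph ρ k = v := by
  induction n with
  | zero => simp [prefs]
  | succ n ih =>
    simp only [prefs, List.mem_append, List.mem_singleton, ih]
    constructor
    · rintro (⟨k, hk, he⟩ | he)
      · exact ⟨k, Nat.lt_succ_of_lt hk, he⟩
      · exact ⟨n, Nat.lt_succ_self n, he.symm⟩
    · rintro ⟨k, hk, he⟩
      rcases Nat.lt_succ_iff_lt_or_eq.mp hk with h | h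
      · exact Or.inl ⟨k, h, he⟩
      · subst h; exact Or.inr he.symm

private lemma alph_inj (ρ : V → ℕ) : Function.Injective (alph ρ) := by
  have key : ∀ k n, k < n → alph ρ k ≠ alph ρ n := by
    intro k n hk he
    have h1 : alph ρ n ∉ prefs ρ n := (nextV_spec ρ (prefs ρ n)).1
    exact h1 ((mem_prefs ρ n (alph ρ n)).mpr ⟨k, hk, he⟩)
  intro k n he
  rcases lt_trichotomy k n with h | h | h
  · exact absurd he (key k n h)
  · exact h
  · exact absurd he.symm (key n k h)

private lemma alph_min (ρ : V → ℕ) (n : ℕ) (w : V) (hw : ∀ k < n, alph ρ k ≠ w) :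
    ρ (alph ρ n) ≤ ρ w := by
  refine (nextV_spec ρ (prefs ρ n)).2 w ?_
  intro hmem
  obtain ⟨k, hk, he⟩ := (mem_prefs ρ n w).mp hmem
  exact hw k hk he

private lemma alph_surj (ρ : V → ℕ) (hfib : ∀ i, {v : V | ρ v ≤ i}.Finite) :
    Function.Surjective (alph ρ) := by
  intro u
  by_contra h
  push_neg at h
  have hmem : ∀ n : ℕ, alph ρ n ∈ {v : V | ρ v ≤ ρ u} := fun n =>
    alph_min ρ n u (fun k _ => h k)
  obtain ⟨k, -, n, -, hkn, he⟩ :=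
    Set.infinite_univ.exists_ne_map_eq_of_mapsTo (fun n _ => hmem n) (hfib (ρ u))
  exact hkn (alph_inj ρ he)

end Aux

/-- If `G` is a connected infinite `Δ`-regular graph admitting a sequence of
finite vertex sets `V₀, V₁, …` covering `V(G)` such that every `v ∈ Vᵢ` (for `i ≥ 1`) has at
least `εΔ` neighbors in `V₀ ∪ ⋯ ∪ V_{i-1}`, then every `(q, r)` with `0 < q < ε` and
`r > (1 - ε)q` lies in the epidemic region `Ω_G`. -/
theorem epidemic_of_growing_cover {V : Type*} (Δ : ℕ) (hΔ : 2 ≤ Δ) (G : SimpleGraph V)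
    (hInf : Infinite V) (hConn : G.Connected) (hReg : IsRegular G Δ)
    (Vs : ℕ → Set V) (hfin : ∀ i, (Vs i).Finite)
    (hcover : (⋃ i, Vs i) = Set.univ)
    (ε : ℝ) (hε0 : 0 < ε) (hε1 : ε < 1)
    (hdeg : ∀ i, 1 ≤ i → ∀ v ∈ Vs i, ε * Δ ≤ (degIn G v (⋃ j < i, Vs j) : ℝ)) :
    ∀ q r : ℝ, 0 < q → q < ε → (1 - ε) * q < r → (q, r) ∈ epidemicRegion G := by
  classical
  intro q r hq0 hqε hrq
  haveI : Infinite V := hInf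
  have hΔnn : (0 : ℝ) ≤ (Δ : ℝ) := Nat.cast_nonneg Δ
  have hr0 : 0 < r := lt_of_le_of_lt (by nlinarith) hrq
  have hq1 : q < 1 := hqε.trans hε1
  have hNfin : ∀ v : V, (G.neighborSet v).Finite := by
    intro v
    apply Set.finite_of_ncard_ne_zero
    rw [hReg v]; omega
  set F : ℕ → Set V := fun i =>
    Vs (i + 1) ∪ {v ∈ Vs 0 | G.neighborSet v ⊆ ⋃ j < i + 1, Vs j} with hFdef
  have hFfin : ∀ i, (F i).Finite := fun i =>
    (hfin (i + 1)).union ((hfin 0).subset (Set.sep_subset _ _))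
  have hFex : ∀ v : V, ∃ i, v ∈ F i := by
    intro v
    have hv : v ∈ ⋃ i, Vs i := hcover ▸ Set.mem_univ v
    obtain ⟨i, hi⟩ := Set.mem_iUnion.mp hv
    cases i with
    | succ i' => exact ⟨i', Or.inl hi⟩
    | zero =>
      have hexj : ∀ u : V, ∃ j, u ∈ Vs j := fun u =>
        Set.mem_iUnion.mp (hcover ▸ Set.mem_univ u)
      set g : V → ℕ := fun u => Classical.choose (hexj u) with hg_def
      have hg : ∀ u, u ∈ Vs (g u) := fun u => Classical.choose_spec (hexj u)
      obtain ⟨m, hm⟩ := ((hNfin v).image g).bddAbove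
      refine ⟨m, Or.inr ⟨hi, ?_⟩⟩
      intro u hu
      have hgum : g u ≤ m := hm ⟨u, hu, rfl⟩
      exact Set.mem_biUnion (Nat.lt_succ_of_le hgum) (hg u)
  set ρ : V → ℕ := fun v => Nat.find (hFex v) with hρdef
  have hρF : ∀ v, v ∈ F (ρ v) := fun v => Nat.find_spec (hFex v)
  have hfib : ∀ i, {v : V | ρ v ≤ i}.Finite := by
    intro i
    apply Set.Finite.subset (Set.Finite.biUnion (Set.finite_Iic i) fun j _ => hFfin j)
    intro v hv
    exact Set.mem_biUnion hv (hρF v)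
  set α : ℕ → V := alph ρ with hα
  have hαsurj : Function.Surjective α := alph_surj ρ hfib
  set σ : ℕ → V → Strat := fun n v =>
    if v ∈ Vs 0 ∨ ∃ k < n, α k = v then Strat.A else Strat.B with hσ
  have hσval : ∀ n v, σ n v = Strat.A ∨ σ n v = Strat.B := by
    intro n v
    simp only [hσ]
    split <;> simp
  have hσA : ∀ n v, (v ∈ Vs 0 ∨ ∃ k < n, α k = v) → σ n v = Strat.A := by
    intro n v h
    simp only [hσ]
    exact if_pos h
  -- vertices of smaller rank are already A
  have hsmallA : ∀ n w, ρ w < ρ (α n) → σ n w = Strat.A := by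
    intro n w hw
    refine hσA n w (Or.inr ?_)
    by_contra hc
    push_neg at hc
    have hmin := alph_min ρ n w hc
    rw [← hα] at hmin
    omega
  -- all vertices of the first (ρ (α n) + 1) layers are A at time n
  have hUA : ∀ n, ∀ u ∈ ⋃ j < ρ (α n) + 1, Vs j, σ n u = Strat.A := by
    intro n u hu
    obtain ⟨j, hj, hu'⟩ := Set.mem_iUnion₂.mp hu
    cases j with
    | zero => exact hσA n u (Or.inl hu')
    | succ j' =>
      have hρu : ρ u ≤ j' := Nat.find_min' (hFex u) (Or.inl hu')
      exact hsmallA n u (by omega)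
  refine ⟨hq0, hq1, hr0, Vs 0, α, σ, hfin 0, hαsurj, ?_, ?_, ?_, ?_, ?_⟩
  · intro v hv
    exact hσA 0 v (Or.inl hv)
  · intro v hv
    simp only [hσ]
    rw [if_neg]
    rintro (h | ⟨k, hk, -⟩)
    · exact hv h
    · omega
  · -- best responses
    intro n
    have hupd : σ (n + 1) (α n) = Strat.A :=
      hσA (n + 1) (α n) (Or.inr ⟨n, Nat.lt_succ_self n, rfl⟩)
    rw [hupd]
    refine bestResponse_A G hq0 hqε hε1.le hrq (σ n) (α n) (hNfin _) (hReg _) ?_ ?_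
    · intro u _
      rcases hσval n u with h | h <;> simp [h]
    · -- at least ε * Δ neighbors play A
      rcases hρF (α n) with hv1 | ⟨hv0, hnb⟩
      · -- α n ∈ Vs (ρ (α n) + 1)
        have hd := hdeg (ρ (α n) + 1) (by omega) (α n) hv1
        refine hd.trans (Nat.cast_le.mpr ?_)
        apply Set.ncard_le_ncard
        · rintro u ⟨hu1, hu2⟩
          exact ⟨hu1, hUA n u hu2⟩
        · exact (hNfin (α n)).subset Set.inter_subset_left
      · -- α n ∈ Vs 0 with all neighbors covered
        have heq : G.neighborSet (α n) ∩ {u | σ n u = Strat.A} = G.neighborSet (α n) := by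
          apply Set.inter_eq_self_of_subset_left
          intro u hu
          exact hUA n u (hnb hu)
        rw [heq, hReg (α n)]
        nlinarith
  · -- frame: other vertices unchanged
    intro n v hv
    simp only [hσ]
    refine if_congr (or_congr_right ?_) rfl rfl
    constructor
    · rintro ⟨k, hk, he⟩
      rcases Nat.lt_succ_iff_lt_or_eq.mp hk with h | h
      · exact ⟨k, h, he⟩
      · subst h; exact absurd he.symm hv
    · rintro ⟨k, hk, he⟩
      exact ⟨k, Nat.lt_succ_of_lt hk, he⟩
  · -- every vertex eventually plays A
    intro v
    obtain ⟨n, hn⟩ := hαsurj v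
    exact ⟨n + 1, hσA (n + 1) v (Or.inr ⟨n, Nat.lt_succ_self n, hn⟩)⟩


end Contagion
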